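/- Let x, y be nonzero vectors in ℂⁿ. There exists a dissipative matrix Δ ∈ ℂ^{n,n} (i.e., Δ + Δ* ⪰ 0) with Δx = y if and only if Re(x*y) ≥ 0. -/

import Mathlib

open Matrix
open scoped ComplexOrder

private lemma vecMulVec_mulVec' {n m : ℕ} (a : Fin m → ℂ) (b v : Fin n → ℂ) :
    (vecMulVec a b).mulVec v = (b ⬝ᵥ v) • a := by
  funext i
  simp [mulVec, vecMulVec_apply, dotProduct, Finset.mul_sum, mul_assoc, mul_comm, mul_left_comm]

/-- There is a dissipative `Δ` (i.e. `Δ + Δ* ⪰ 0`) with `Δx = y` iff `Re(x*y) ≥ 0`. -/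
theorem dissipative_mapping_exists {n : ℕ} (x y : Fin n → ℂ) (hx : x ≠ 0) (hy : y ≠ 0) :
    (∃ Δ : Matrix (Fin n) (Fin n) ℂ, (Δ + Δᴴ).PosSemidef ∧ Δ.mulVec x = y) ↔
      0 ≤ (star x ⬝ᵥ y).re := by
  set r : ℂ := star x ⬝ᵥ x with hr
  set c : ℂ := star x ⬝ᵥ y with hc
  have hrstar : star r = r := by
    simp [hr, dotProduct, star_sum, mul_comm]
  have hr0 : r ≠ 0 := by
    intro h
    exact hx (by simpa using (dotProduct_star_self_eq_zero (v := x)).mp h)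
  constructor
  · rintro ⟨Δ, hP, hΔx⟩
    have h := hP.dotProduct_mulVec_nonneg x
    have h2 : star x ⬝ᵥ Δᴴ *ᵥ x = star (star x ⬝ᵥ Δ *ᵥ x) := by
      rw [star_dotProduct, star_mulVec, conjTranspose_conjTranspose, ← dotProduct_mulVec]
    have hq : star x ⬝ᵥ (Δ + Δᴴ).mulVec x = c + star c := by
      rw [add_mulVec, dotProduct_add, h2, hΔx, ← hc]
    rw [hq] at h
    have := (Complex.le_def.mp h).1
    simp only [Complex.add_re, Complex.zero_re] at this
    rw [Complex.star_def, Complex.conj_re] at this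
    linarith
  · intro hre
    set z : Fin n → ℂ := y - (c / r) • x with hz
    refine ⟨r⁻¹ • (vecMulVec y (star x) - vecMulVec x (star z)), ?_, ?_⟩
    · -- dissipativity
      have key : (r⁻¹ • (vecMulVec y (star x) - vecMulVec x (star z)))
            + (r⁻¹ • (vecMulVec y (star x) - vecMulVec x (star z)))ᴴ
          = ((2 * c.re : ℝ) / Complex.normSq r : ℂ) • vecMulVec x (star x) := by
        have hcr : (starRingEnd ℂ) r = r := hrstar
        ext i j
        simp only [Matrix.add_apply, Matrix.smul_apply, conjTranspose_apply, Matrix.sub_apply,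
          vecMulVec_apply, Pi.star_apply, hz, Pi.sub_apply, Pi.smul_apply, smul_eq_mul,
          star_sub, star_mul', map_sub, _root_.map_mul, map_div₀, hcr,
          RingHom.id_apply, Complex.star_def, Complex.conj_conj, star_inv₀]
        have h2c : (((2 * c.re : ℝ) : ℂ)) = c + (starRingEnd ℂ) c := by
          rw [Complex.add_conj]
        have hnsq : ((Complex.normSq r : ℂ)) = r * r := by
          rw [← Complex.mul_conj, hcr]
        rw [h2c, hnsq]
        field_simp
        ring
      rw [key]
      refine Matrix.PosSemidef.of_dotProduct_mulVec_nonneg ?_ ?_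
      · unfold IsHermitian
        ext i j
        simp [vecMulVec_apply, mul_comm, Complex.star_def]
      · intro v
        rw [Matrix.smul_mulVec, vecMulVec_mulVec', dotProduct_smul, dotProduct_smul,
          smul_eq_mul, smul_eq_mul]
        have hsv : star v ⬝ᵥ x = star (star x ⬝ᵥ v) := star_dotProduct _ _
        rw [hsv, Complex.star_def, Complex.mul_conj]
        have hcast : (↑(2 * c.re) / ↑(Complex.normSq r) * ↑(Complex.normSq (star x ⬝ᵥ v)) : ℂ)
            = ((2 * c.re / Complex.normSq r * Complex.normSq (star x ⬝ᵥ v) : ℝ) : ℂ) := by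
          push_cast; ring
        rw [hcast, Complex.zero_le_real]
        exact mul_nonneg (div_nonneg (by linarith) (Complex.normSq_nonneg _))
          (Complex.normSq_nonneg _)
    · -- maps x to y
      have hxz : star x ⬝ᵥ z = 0 := by
        simp only [hz, dotProduct_sub, dotProduct_smul, smul_eq_mul, ← hr, ← hc]
        field_simp
        ring
      have hzx : star z ⬝ᵥ x = 0 := by
        rw [star_dotProduct, hxz, star_zero]
      rw [Matrix.smul_mulVec, sub_mulVec, vecMulVec_mulVec', vecMulVec_mulVec',
        hzx, ← hr]
      simp [smul_smul, inv_mul_cancel₀ hr0]
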